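/- For any almost-Riordan array (a,g,f), the triple (a*, 1/(g∘f̄), f̄) with a* = (1, −1/(g∘f̄), f̄)·a is a two-sided inverse of (a,g,f) for the almost-Riordan product. In particular (a,g,f)·a* = 1. -/

import Mathlib

open PowerSeries Finset

/-- Shift: `shift h = (h - h₀)/x`, i.e. the series with coefficients `h₁, h₂, …`. -/
noncomputable def shift (h : PowerSeries ℤ) : PowerSeries ℤ :=
  PowerSeries.mk fun n => coeff (n + 1) h

/-- Composition `h ∘ f` of formal power series (intended for `f` with zero constant term,
in which case `coeff n (f ^ k) = 0` for `k > n`). -/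
noncomputable def comp (h f : PowerSeries ℤ) : PowerSeries ℤ :=
  PowerSeries.mk fun n => ∑ k ∈ Finset.range (n + 1), coeff k h * coeff n (f ^ k)

/-- Action of an almost-Riordan array `(a,g,f)` on a power series `b`:
`(a,g,f)·b = b₀ a + x g b̃(f)` where `b̃ = (b - b₀)/x`. -/
noncomputable def act (a g f b : PowerSeries ℤ) : PowerSeries ℤ :=
  C (coeff 0 b) * a + X * g * comp (shift b) f

/-- Product of almost-Riordan arrays: `(a,g,f)·(b,u,v) = ((a,g,f)·b, g·u(f), v(f))`. -/
noncomputable def arMul (t s : PowerSeries ℤ × PowerSeries ℤ × PowerSeries ℤ) :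
    PowerSeries ℤ × PowerSeries ℤ × PowerSeries ℤ :=
  (act t.1 t.2.1 t.2.2 s.1, t.2.1 * comp s.2.1 t.2.2, comp s.2.2 t.2.2)

/-- `(a,g,f)` is an almost-Riordan array: `a₀ = 1`, `g₀ = 1`, `f₀ = 0`, `f₁ = 1`. -/
def isAR (t : PowerSeries ℤ × PowerSeries ℤ × PowerSeries ℤ) : Prop :=
  coeff 0 t.1 = 1 ∧ coeff 0 t.2.1 = 1 ∧ coeff 0 t.2.2 = 0 ∧ coeff 1 t.2.2 = 1

section AuxLemmas

lemma coeff_comp (h f : PowerSeries ℤ) (n : ℕ) :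
    coeff n (comp h f) = ∑ k ∈ Finset.range (n + 1), coeff k h * coeff n (f ^ k) := by
  simp [comp]

lemma coeff_pow_eq_zero {f : PowerSeries ℤ} (hf : coeff 0 f = 0) {n k : ℕ} (h : n < k) :
    coeff n (f ^ k) = 0 := by
  have hX : (X : PowerSeries ℤ) ∣ f := X_dvd_iff.mpr (by rwa [← coeff_zero_eq_constantCoeff])
  exact (X_pow_dvd_iff.mp (pow_dvd_pow_of_dvd hX k)) n h

lemma coeff_eval₂ {f : PowerSeries ℤ} (hf : coeff 0 f = 0) (p : Polynomial ℤ) (n : ℕ) :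
    coeff n (Polynomial.eval₂ (C) f p) =
      ∑ k ∈ Finset.range (n + 1), p.coeff k * coeff n (f ^ k) := by
  have hd : p.natDegree < p.natDegree + n + 2 := by omega
  rw [Polynomial.eval₂_eq_sum_range' (C) hd f, map_sum]
  have : ∀ k ∈ Finset.range (p.natDegree + n + 2),
      coeff n (C (p.coeff k) * f ^ k) = p.coeff k * coeff n (f ^ k) := by
    intro k _; rw [coeff_C_mul]
  rw [Finset.sum_congr rfl this]
  refine (Finset.sum_subset ?_ ?_).symm
  · intro k hk; simp only [Finset.mem_range] at *; omega
  · intro k _ hk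
    simp only [Finset.mem_range] at hk
    rw [coeff_pow_eq_zero hf (by omega), mul_zero]

lemma coeff_comp_eq_eval₂ {f : PowerSeries ℤ} (hf : coeff 0 f = 0) (h : PowerSeries ℤ)
    {n N : ℕ} (hN : n < N) :
    coeff n (comp h f) = coeff n (Polynomial.eval₂ (C) f (trunc N h)) := by
  rw [coeff_eval₂ hf, coeff_comp]
  refine Finset.sum_congr rfl fun k hk => ?_
  simp only [Finset.mem_range] at hk
  rw [coeff_trunc, if_pos (by omega)]

lemma comp_C (c : ℤ) (f : PowerSeries ℤ) : comp (C c) f = C c := by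
  ext n
  rw [coeff_comp]
  simp only [coeff_C, ite_mul, zero_mul]
  rw [Finset.sum_ite_eq' (Finset.range (n + 1)) 0 (fun k => c * coeff n (f ^ k)),
    if_pos (Finset.mem_range.mpr (by omega))]
  simp [coeff_one]

lemma comp_one (f : PowerSeries ℤ) : comp 1 f = 1 := by
  simpa using comp_C 1 f

lemma comp_X (h : PowerSeries ℤ) : comp h X = h := by
  ext n
  rw [coeff_comp]
  simp only [coeff_X_pow, mul_ite, mul_one, mul_zero]
  rw [Finset.sum_ite_eq (Finset.range (n + 1)) n (fun k => coeff k h),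
    if_pos (Finset.mem_range.mpr (by omega))]

lemma comp_neg (h f : PowerSeries ℤ) : comp (-h) f = -comp h f := by
  ext n
  rw [map_neg, coeff_comp, coeff_comp, ← Finset.sum_neg_distrib]
  exact Finset.sum_congr rfl fun k _ => by rw [map_neg]; ring

lemma comp_mul {f : PowerSeries ℤ} (hf : coeff 0 f = 0) (h₁ h₂ : PowerSeries ℤ) :
    comp (h₁ * h₂) f = comp h₁ f * comp h₂ f := by
  ext n
  rw [coeff_mul]
  have hstep : ∀ p ∈ antidiagonal n,
      coeff p.1 (comp h₁ f) * coeff p.2 (comp h₂ f) =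
      coeff p.1 (Polynomial.eval₂ (C) f (trunc (n + 1) h₁)) *
        coeff p.2 (Polynomial.eval₂ (C) f (trunc (n + 1) h₂)) := by
    intro p hp
    rw [Finset.HasAntidiagonal.mem_antidiagonal] at hp
    rw [coeff_comp_eq_eval₂ hf h₁ (show p.1 < n + 1 by omega),
      coeff_comp_eq_eval₂ hf h₂ (show p.2 < n + 1 by omega)]
  rw [Finset.sum_congr rfl hstep, ← coeff_mul, ← Polynomial.eval₂_mul,
    coeff_comp_eq_eval₂ hf (h₁ * h₂) (Nat.lt_succ_self n), coeff_eval₂ hf, coeff_eval₂ hf]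
  refine Finset.sum_congr rfl fun k hk => ?_
  simp only [Finset.mem_range] at hk
  congr 1
  rw [coeff_trunc, if_pos (show k < n + 1 by omega), PowerSeries.coeff_mul,
    Polynomial.coeff_mul]
  refine Finset.sum_congr rfl fun p hp => ?_
  rw [Finset.HasAntidiagonal.mem_antidiagonal] at hp
  rw [coeff_trunc, coeff_trunc, if_pos (by omega), if_pos (by omega)]

lemma comp_pow {f : PowerSeries ℤ} (hf : coeff 0 f = 0) (h : PowerSeries ℤ) (k : ℕ) :
    comp (h ^ k) f = comp h f ^ k := by
  induction k with
  | zero => simpa using comp_one f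
  | succ k ih => rw [pow_succ, pow_succ, comp_mul hf, ih]

lemma comp_assoc {f g : PowerSeries ℤ} (hf : coeff 0 f = 0) (hg : coeff 0 g = 0)
    (h : PowerSeries ℤ) : comp (comp h f) g = comp h (comp f g) := by
  ext n
  rw [coeff_comp, coeff_comp]
  have hR : ∀ k ∈ Finset.range (n + 1),
      coeff k h * coeff n (comp f g ^ k) =
      coeff k h * ∑ j ∈ Finset.range (n + 1), coeff j (f ^ k) * coeff n (g ^ j) := by
    intro k _
    rw [← comp_pow hg f k, coeff_comp]
  have hL : ∀ j ∈ Finset.range (n + 1),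
      coeff j (comp h f) * coeff n (g ^ j) =
      (∑ k ∈ Finset.range (n + 1), coeff k h * coeff j (f ^ k)) * coeff n (g ^ j) := by
    intro j hj
    simp only [Finset.mem_range] at hj
    rw [coeff_comp]
    congr 1
    refine Finset.sum_subset ?_ ?_
    · intro k hk; simp only [Finset.mem_range] at *; omega
    · intro k _ hk
      simp only [Finset.mem_range] at hk
      rw [coeff_pow_eq_zero hf (by omega), mul_zero]
  rw [Finset.sum_congr rfl hR, Finset.sum_congr rfl hL]
  simp only [Finset.sum_mul, Finset.mul_sum]
  rw [Finset.sum_comm]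
  exact Finset.sum_congr rfl fun k _ => Finset.sum_congr rfl fun j _ => by ring

lemma shift_add (h₁ h₂ : PowerSeries ℤ) : shift (h₁ + h₂) = shift h₁ + shift h₂ := by
  ext n; simp [shift]

lemma shift_one : shift (1 : PowerSeries ℤ) = 0 := by
  ext n; simp [shift, coeff_one]

lemma shift_X_mul (h : PowerSeries ℤ) : shift (X * h) = h := by
  ext n; simp [shift, coeff_succ_X_mul]

lemma C_add_X_mul_shift (h : PowerSeries ℤ) : C (coeff 0 h) + X * shift h = h := by
  ext n
  cases n with
  | zero => simp [coeff_C]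
  | succ n =>
    rw [map_add, coeff_C, if_neg (Nat.succ_ne_zero n), coeff_succ_X_mul, zero_add]
    simp [shift]

end AuxLemmas

/-- `(a,g,f)⁻¹ = (a*, 1/(g∘f̄), f̄)` with `a* = (1, −1/(g∘f̄), f̄)·a`;
in particular `(a,g,f)·a* = 1`. -/
theorem statement6 (a g f fi gi astar : PowerSeries ℤ)
    (ha : coeff 0 a = 1) (hg : coeff 0 g = 1)
    (hf0 : coeff 0 f = 0) (hf1 : coeff 1 f = 1)
    (hfi0 : coeff 0 fi = 0)
    (hffi : comp f fi = X) (hfif : comp fi f = X)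
    (hgi : comp g fi * gi = 1)
    (hastar : astar = act 1 (-gi) fi a) :
    arMul (a, g, f) (astar, gi, fi) = (1, 1, X) ∧
    arMul (astar, gi, fi) (a, g, f) = (1, 1, X) ∧
    act a g f astar = 1 := by
  -- astar in convenient form
  have h1 : astar = 1 + X * (-(gi * comp (shift a) fi)) := by
    rw [hastar]; unfold act; rw [ha, map_one]; ring
  -- g * comp gi f = 1
  have hkey : g * comp gi f = 1 := by
    have h2 := congrArg (fun t => comp t f) hgi
    simp only [comp_mul hf0, comp_one] at h2
    rwa [comp_assoc hfi0 hf0, hfif, comp_X] at h2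
  -- shift astar
  have hshift : shift astar = -(gi * comp (shift a) fi) := by
    rw [h1, shift_add, shift_one, shift_X_mul, zero_add]
  -- coeff 0 astar = 1
  have h0 : coeff 0 astar = 1 := by
    rw [h1]
    simp [coeff_one, coeff_C]
  -- act a g f astar = 1
  have hact : act a g f astar = 1 := by
    unfold act
    rw [h0, map_one, one_mul, hshift, comp_neg, comp_mul hf0,
      comp_assoc hfi0 hf0, hfif, comp_X]
    have : a + X * g * -(comp gi f * shift a) = a - X * (g * comp gi f) * shift a := by ring
    rw [this, hkey]
    have := C_add_X_mul_shift a
    rw [ha, map_one] at this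
    linear_combination -this
  -- act astar gi fi a = 1
  have hact2 : act astar gi fi a = 1 := by
    unfold act
    rw [ha, map_one, one_mul, h1]; ring
  refine ⟨?_, ?_, hact⟩
  · show (act a g f astar, g * comp gi f, comp fi f) = (1, 1, X)
    rw [hact, hkey, hfif]
  · show (act astar gi fi a, gi * comp g fi, comp f fi) = (1, 1, X)
    rw [hact2, mul_comm gi _, hgi, hffi]
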